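/- Soundness of proof of presence for hash lists: if H is injective (as a function of the pair of arguments), H never outputs h0, and represents(ℓ, h) and verifyPP(π, R, h) both hold, then R is a member of ℓ. -/

import Mathlib

inductive Represents {Λ Δ : Type*} (H : Λ × Δ → Δ) (h0 : Δ) : List Λ → Δ → Prop
  | nil : Represents H h0 [] h0
  | cons {ℓ : List Λ} {h : Δ} (R : Λ) :
      Represents H h0 ℓ h → Represents H h0 (R :: ℓ) (H (R, h))

inductive VerifyPP {Λ Δ : Type*} (H : Λ × Δ → Δ) : List Λ × Δ → Λ → Δ → Prop
  | base (R : Λ) (h' : Δ) : VerifyPP H ([], h') R (H (R, h'))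
  | cons {ℓ : List Λ} {h' h : Δ} {R : Λ} (Q : Λ) :
      VerifyPP H (ℓ, h') R h → VerifyPP H (Q :: ℓ, h') R (H (Q, h))

inductive VerifyPE {Λ Δ : Type*} (H : Λ × Δ → Δ) : List Λ → Δ → Δ → Prop
  | nil (h : Δ) : VerifyPE H [] h h
  | cons {ℓ : List Λ} {h1 h2 : Δ} (R : Λ) :
      VerifyPE H ℓ h1 h2 → VerifyPE H (R :: ℓ) h1 (H (R, h2))

theorem verifyPP_sound {Λ Δ : Type*} (H : Λ × Δ → Δ) (h0 : Δ)
    (hinj : Function.Injective H) (hne : ∀ x : Λ × Δ, H x ≠ h0)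
    (ℓ : List Λ) (h : Δ) (R : Λ) (π : List Λ × Δ)
    (hrep : Represents H h0 ℓ h) (hpp : VerifyPP H π R h) :
    R ∈ ℓ := by
  induction hpp generalizing ℓ with
  | base R' h' =>
    generalize hE : H (R', h') = x at hrep
    cases hrep with
    | nil => exact absurd hE (hne (R', h'))
    | cons R'' hrep' =>
      obtain ⟨rfl, rfl⟩ : R'' = R' ∧ _ = h' := Prod.mk.injEq .. ▸ hinj hE.symm
      exact List.mem_cons_self
  | cons Q hpp ih =>
    rename_i hmid _
    generalize hE : H (Q, hmid) = x at hrep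
    cases hrep with
    | nil => exact absurd hE (hne _)
    | cons R'' hrep' =>
      obtain ⟨rfl, rfl⟩ : R'' = Q ∧ _ = hmid := Prod.mk.injEq .. ▸ hinj hE.symm
      exact List.mem_cons_of_mem _ (ih _ hrep')
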